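/- Let G and H be cubic bridgeless graphs, let xy be an edge of G and uv an edge of H. Then the gluing of (G,x,y) and (H,u,v) — the graph obtained from the disjoint union of G and H by deleting the edges xy and uv and adding the edges xu and yv — is a cubic bridgeless graph. -/

import Mathlib

open SimpleGraph

/-- A graph is cubic (3-regular) if every vertex has exactly 3 neighbours. -/
def IsCubic {V : Type*} (G : SimpleGraph V) : Prop :=
  ∀ v : V, (G.neighborSet v).ncard = 3

/-- A graph is bridgeless if it has no cut-edge. -/
def IsBridgeless {V : Type*} (G : SimpleGraph V) : Prop :=
  ∀ e : Sym2 V, ¬ G.IsBridge e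

/-- The edge set of `G` can be covered by `k` perfect matchings. -/
def CoverByPM {V : Type*} (G : SimpleGraph V) (k : ℕ) : Prop :=
  ∃ M : Fin k → G.Subgraph,
    (∀ i, (M i).IsPerfectMatching) ∧ (⋃ i, (M i).edgeSet) = G.edgeSet

/-- The excessive index of `G`: the least number of perfect matchings needed to
cover the edge set of `G` (`⊤` if there is no such cover). -/
noncomputable def excessiveIndex {V : Type*} (G : SimpleGraph V) : ℕ∞ :=
  sInf {k : ℕ∞ | ∃ n : ℕ, k = n ∧ CoverByPM G n}

/-- `G` has a proper edge colouring with `n` colours. -/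
def ProperEdgeColorable {V : Type*} (G : SimpleGraph V) (n : ℕ) : Prop :=
  ∃ c : Sym2 V → Fin n, ∀ e ∈ G.edgeSet, ∀ f ∈ G.edgeSet,
    e ≠ f → (∃ v : V, v ∈ e ∧ v ∈ f) → c e ≠ c f

/-- The set of edges of `G` with one end-vertex in `A` and the other in `B`. -/
def edgesBetween {V : Type*} (G : SimpleGraph V) (A B : Set V) : Set (Sym2 V) :=
  {e | ∃ a b, G.Adj a b ∧ a ∈ A ∧ b ∈ B ∧ e = s(a, b)}

/-- The set of edges of `G` with exactly one end-vertex in `A`. -/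
def edgeBoundary {V : Type*} (G : SimpleGraph V) (A : Set V) : Set (Sym2 V) :=
  edgesBetween G A Aᶜ

/-- The subgraph induced on `A` contains a cycle. -/
def HasCycleOn {V : Type*} (G : SimpleGraph V) (A : Set V) : Prop :=
  ¬ (G.induce A).IsAcyclic

/-- `G` is cyclically `k`-edge-connected: there is no edge-cut with fewer than `k`
edges separating two parts each containing a cycle. -/
def CyclicallyEdgeConnected {V : Type*} (G : SimpleGraph V) (k : ℕ) : Prop :=
  ∀ A : Set V, HasCycleOn G A → HasCycleOn G Aᶜ → k ≤ (edgeBoundary G A).ncard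

/-- A snark: a cubic, cyclically 4-edge-connected graph of girth at least five
that is not 3-edge-colourable. -/
def IsSnark {V : Type*} (G : SimpleGraph V) : Prop :=
  IsCubic G ∧ CyclicallyEdgeConnected G 4 ∧ 5 ≤ G.girth ∧ ¬ ProperEdgeColorable G 3

/-- The gluing of `(G, x, y)` and `(H, u, v)`: remove the edges `x — y` and
`u — v`, and join `x` to `u` and `y` to `v`. -/
def gluing {V W : Type*} (G : SimpleGraph V) (H : SimpleGraph W) (x y : V) (u v : W) :
    SimpleGraph (V ⊕ W) :=
  SimpleGraph.fromRel (fun p q =>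
    (∃ a b : V, G.Adj a b ∧ s(a, b) ≠ s(x, y) ∧ p = Sum.inl a ∧ q = Sum.inl b) ∨
    (∃ a b : W, H.Adj a b ∧ s(a, b) ≠ s(u, v) ∧ p = Sum.inr a ∧ q = Sum.inr b) ∨
    (p = Sum.inl x ∧ q = Sum.inr u) ∨ (p = Sum.inl y ∧ q = Sum.inr v))


section GluingAux

variable {V W : Type} {G : SimpleGraph V} {H : SimpleGraph W} {x y : V} {u v : W}



lemma gluing_adj_inl_inl {a b : V} :
    (gluing G H x y u v).Adj (Sum.inl a) (Sum.inl b) ↔ G.Adj a b ∧ s(a,b) ≠ s(x,y) := by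
  rw [gluing, fromRel_adj]
  constructor
  · rintro ⟨hne, (⟨a',b',h1,h2,h3,h4⟩|⟨a',b',h1,h2,h3,h4⟩|⟨h3,h4⟩|⟨h3,h4⟩)|
      (⟨a',b',h1,h2,h3,h4⟩|⟨a',b',h1,h2,h3,h4⟩|⟨h3,h4⟩|⟨h3,h4⟩)⟩
    · obtain rfl : a = a' := Sum.inl_injective h3
      obtain rfl : b = b' := Sum.inl_injective h4
      exact ⟨h1, h2⟩
    · simp at h3
    · simp at h4
    · simp at h4
    · obtain rfl : b = a' := Sum.inl_injective h3
      obtain rfl : a = b' := Sum.inl_injective h4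
      exact ⟨h1.symm, by rwa [Sym2.eq_swap]⟩
    · simp at h3
    · simp at h4
    · simp at h4
  · rintro ⟨h1, h2⟩
    exact ⟨by simpa using h1.ne, Or.inl (Or.inl ⟨a, b, h1, h2, rfl, rfl⟩)⟩

lemma gluing_adj_inr_inr {a b : W} :
    (gluing G H x y u v).Adj (Sum.inr a) (Sum.inr b) ↔ H.Adj a b ∧ s(a,b) ≠ s(u,v) := by
  rw [gluing, fromRel_adj]
  constructor
  · rintro ⟨hne, (⟨a',b',h1,h2,h3,h4⟩|⟨a',b',h1,h2,h3,h4⟩|⟨h3,h4⟩|⟨h3,h4⟩)|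
      (⟨a',b',h1,h2,h3,h4⟩|⟨a',b',h1,h2,h3,h4⟩|⟨h3,h4⟩|⟨h3,h4⟩)⟩
    · simp at h3
    · obtain rfl : a = a' := Sum.inr_injective h3
      obtain rfl : b = b' := Sum.inr_injective h4
      exact ⟨h1, h2⟩
    · simp at h3
    · simp at h3
    · simp at h3
    · obtain rfl : b = a' := Sum.inr_injective h3
      obtain rfl : a = b' := Sum.inr_injective h4
      exact ⟨h1.symm, by rwa [Sym2.eq_swap]⟩
    · simp at h3
    · simp at h3
  · rintro ⟨h1, h2⟩
    exact ⟨by simpa using h1.ne, Or.inl (Or.inr (Or.inl ⟨a, b, h1, h2, rfl, rfl⟩))⟩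

lemma gluing_adj_inl_inr {a : V} {b : W} :
    (gluing G H x y u v).Adj (Sum.inl a) (Sum.inr b) ↔ (a = x ∧ b = u) ∨ (a = y ∧ b = v) := by
  rw [gluing, fromRel_adj]
  constructor
  · rintro ⟨hne, (⟨a',b',h1,h2,h3,h4⟩|⟨a',b',h1,h2,h3,h4⟩|⟨h3,h4⟩|⟨h3,h4⟩)|
      (⟨a',b',h1,h2,h3,h4⟩|⟨a',b',h1,h2,h3,h4⟩|⟨h3,h4⟩|⟨h3,h4⟩)⟩
    · simp at h4
    · simp at h3
    · exact Or.inl ⟨Sum.inl_injective h3, Sum.inr_injective h4⟩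
    · exact Or.inr ⟨Sum.inl_injective h3, Sum.inr_injective h4⟩
    · simp at h3
    · simp at h4
    · simp at h3
    · simp at h3
  · rintro (⟨rfl, rfl⟩|⟨rfl, rfl⟩)
    · exact ⟨by simp, Or.inl (Or.inr (Or.inr (Or.inl ⟨rfl, rfl⟩)))⟩
    · exact ⟨by simp, Or.inl (Or.inr (Or.inr (Or.inr ⟨rfl, rfl⟩)))⟩

lemma gluing_adj_inr_inl {a : V} {b : W} :
    (gluing G H x y u v).Adj (Sum.inr b) (Sum.inl a) ↔ (a = x ∧ b = u) ∨ (a = y ∧ b = v) := by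
  rw [adj_comm, gluing_adj_inl_inr]





lemma nbr_inl_other (hxy : G.Adj x y) {a : V} (hax : a ≠ x) (hay : a ≠ y) :
    (gluing G H x y u v).neighborSet (Sum.inl a) = Sum.inl '' G.neighborSet a := by
  ext b
  rcases b with b | b
  · simp only [mem_neighborSet, gluing_adj_inl_inl, Set.mem_image, Sum.inl.injEq,
      exists_eq_right]
    constructor
    · rintro ⟨h1, _⟩; exact h1
    · intro hc
      refine ⟨hc, ?_⟩
      rw [Ne, Sym2.eq_iff]; rintro (⟨rfl, rfl⟩|⟨rfl, rfl⟩) <;> simp_all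
  · simp only [mem_neighborSet, gluing_adj_inl_inr, Set.mem_image]
    constructor
    · rintro (⟨rfl, rfl⟩|⟨rfl, rfl⟩) <;> simp_all
    · rintro ⟨c, _, hcb⟩; simp at hcb

lemma nbr_inl_x (hxy : G.Adj x y) :
    (gluing G H x y u v).neighborSet (Sum.inl x)
      = Sum.inl '' (G.neighborSet x \ {y}) ∪ {Sum.inr u} := by
  have hxny : x ≠ y := hxy.ne
  ext b
  rcases b with b | b
  · simp only [mem_neighborSet, gluing_adj_inl_inl, Set.mem_union, Set.mem_image, Set.mem_diff,
      Set.mem_singleton_iff, mem_neighborSet, Sum.inl.injEq, exists_eq_right, reduceCtorEq,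
      or_false]
    constructor
    · rintro ⟨h1, h2⟩
      refine ⟨h1, ?_⟩
      rintro rfl; exact h2 rfl
    · rintro ⟨hc, hcy⟩
      refine ⟨hc, ?_⟩
      rw [Ne, Sym2.eq_iff]; rintro (⟨-, rfl⟩|⟨rfl, rfl⟩) <;> simp_all
  · simp only [mem_neighborSet, gluing_adj_inl_inr, Set.mem_union, Set.mem_image,
      Set.mem_singleton_iff, reduceCtorEq, Sum.inr.injEq, true_and, hxny, false_and, or_false,
      exists_false, false_or]
    tauto
lemma nbr_inl_y (hxy : G.Adj x y) :
    (gluing G H x y u v).neighborSet (Sum.inl y)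
      = Sum.inl '' (G.neighborSet y \ {x}) ∪ {Sum.inr v} := by
  have hxny : x ≠ y := hxy.ne
  ext b
  rcases b with b | b
  · simp only [mem_neighborSet, gluing_adj_inl_inl, Set.mem_union, Set.mem_image, Set.mem_diff,
      Set.mem_singleton_iff, mem_neighborSet, Sum.inl.injEq, exists_eq_right, reduceCtorEq,
      or_false]
    constructor
    · rintro ⟨h1, h2⟩
      refine ⟨h1, ?_⟩
      rintro rfl; exact h2 (Sym2.eq_swap)
    · rintro ⟨hc, hcy⟩
      refine ⟨hc, ?_⟩
      rw [Ne, Sym2.eq_iff]; rintro (⟨rfl, rfl⟩|⟨-, rfl⟩) <;> simp_all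
  · simp only [mem_neighborSet, gluing_adj_inl_inr, Set.mem_union, Set.mem_image,
      Set.mem_singleton_iff, reduceCtorEq, Sum.inr.injEq, true_and, Ne.symm hxny, false_and,
      or_false, exists_false, false_or]
    tauto

lemma nbr_inr_u (hxy : G.Adj x y) (huv : H.Adj u v) :
    (gluing G H x y u v).neighborSet (Sum.inr u)
      = Sum.inr '' (H.neighborSet u \ {v}) ∪ {Sum.inl x} := by
  have huvne : u ≠ v := huv.ne
  ext b
  rcases b with b | b
  · simp only [mem_neighborSet, gluing_adj_inr_inl, Set.mem_union, Set.mem_image,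
      Set.mem_singleton_iff, Sum.inl.injEq, reduceCtorEq, exists_false, false_or, true_and,
      Ne.symm huvne, and_false, or_false]
    tauto
  · simp only [mem_neighborSet, gluing_adj_inr_inr, Set.mem_union, Set.mem_image, Set.mem_diff,
      Set.mem_singleton_iff, mem_neighborSet, Sum.inr.injEq, exists_eq_right, reduceCtorEq,
      or_false]
    constructor
    · rintro ⟨h1, h2⟩
      refine ⟨h1, ?_⟩
      rintro rfl; exact h2 rfl
    · rintro ⟨hc, hcy⟩
      refine ⟨hc, ?_⟩
      rw [Ne, Sym2.eq_iff]; rintro (⟨-, rfl⟩|⟨rfl, rfl⟩) <;> simp_all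

lemma nbr_inr_v (hxy : G.Adj x y) (huv : H.Adj u v) :
    (gluing G H x y u v).neighborSet (Sum.inr v)
      = Sum.inr '' (H.neighborSet v \ {u}) ∪ {Sum.inl y} := by
  have huvne : u ≠ v := huv.ne
  ext b
  rcases b with b | b
  · simp only [mem_neighborSet, gluing_adj_inr_inl, Set.mem_union, Set.mem_image,
      Set.mem_singleton_iff, Sum.inl.injEq, reduceCtorEq, exists_false, false_or, true_and,
      huvne, and_false, false_or, or_false]
    tauto
  · simp only [mem_neighborSet, gluing_adj_inr_inr, Set.mem_union, Set.mem_image, Set.mem_diff,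
      Set.mem_singleton_iff, mem_neighborSet, Sum.inr.injEq, exists_eq_right, reduceCtorEq,
      or_false]
    constructor
    · rintro ⟨h1, h2⟩
      refine ⟨h1, ?_⟩
      rintro rfl; exact h2 Sym2.eq_swap
    · rintro ⟨hc, hcy⟩
      refine ⟨hc, ?_⟩
      rw [Ne, Sym2.eq_iff]; rintro (⟨rfl, rfl⟩|⟨-, rfl⟩) <;> simp_all

lemma nbr_inr_other (huv : H.Adj u v) {a : W} (hax : a ≠ u) (hay : a ≠ v) :
    (gluing G H x y u v).neighborSet (Sum.inr a) = Sum.inr '' H.neighborSet a := by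
  ext b
  rcases b with b | b
  · simp only [mem_neighborSet, gluing_adj_inr_inl, Set.mem_image]
    constructor
    · rintro (⟨rfl, rfl⟩|⟨rfl, rfl⟩) <;> simp_all
    · rintro ⟨c, _, hcb⟩; simp at hcb
  · simp only [mem_neighborSet, gluing_adj_inr_inr, Set.mem_image, Sum.inr.injEq,
      exists_eq_right]
    constructor
    · rintro ⟨h1, _⟩; exact h1
    · intro hc
      refine ⟨hc, ?_⟩
      rw [Ne, Sym2.eq_iff]; rintro (⟨rfl, rfl⟩|⟨rfl, rfl⟩) <;> simp_all






lemma exists_walk_avoid {G : SimpleGraph V} (hGb : IsBridgeless G) {a b : V} (hab : G.Adj a b) :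
    ∃ p : G.Walk a b, s(a,b) ∉ p.edges := by
  have h := hGb s(a,b)
  rw [isBridge_iff_adj_and_forall_walk_mem_edges] at h
  push_neg at h
  exact h

lemma exists_walk_avoid' {G : SimpleGraph V} (hGb : IsBridgeless G) (a b : V) :
    ∃ p : G.Walk a b, s(a,b) ∉ p.edges := by
  have h := hGb s(a,b)
  rw [isBridge_iff_forall_walk_mem_edges] at h
  push_neg at h
  exact h

/-- no `inr` vertex in an edge coming from `G`. -/
lemma no_inr_in_map_inl {f : Sym2 V} {w : W} : (Sum.inr w : V ⊕ W) ∉ Sym2.map Sum.inl f := by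
  induction f using Sym2.ind with
  | _ c d => simp

lemma no_inl_in_map_inr {f : Sym2 W} {w : V} : (Sum.inl w : V ⊕ W) ∉ Sym2.map Sum.inr f := by
  induction f using Sym2.ind with
  | _ c d => simp

/-- a walk in `G` avoiding `s(x,y)` gives a walk on the left side of the gluing. -/
lemma exists_walkK_inl {a b : V} (p : G.Walk a b) (hp : s(x,y) ∉ p.edges) :
    ∃ q : (gluing G H x y u v).Walk (Sum.inl a) (Sum.inl b),
      ∀ e ∈ q.edges, ∃ f ∈ p.edges, e = Sym2.map Sum.inl f := by
  have hmap : ∀ {c d : V}, (G.deleteEdges {s(x,y)}).Adj c d →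
      (gluing G H x y u v).Adj (Sum.inl c) (Sum.inl d) := by
    intro c d hab
    rw [deleteEdges_adj] at hab
    exact gluing_adj_inl_inl.2 ⟨hab.1, by simpa using hab.2⟩
  refine ⟨(p.toDeleteEdges {s(x,y)} ?_).map ⟨Sum.inl, hmap⟩, ?_⟩
  · intro e he heq
    obtain rfl := Set.eq_of_mem_singleton heq
    exact hp he
  · intro e he
    rw [Walk.edges_map, Walk.edges_transfer] at he
    simp only [List.mem_map] at he
    obtain ⟨f, hf, rfl⟩ := he
    exact ⟨f, hf, rfl⟩

lemma exists_walkK_inr {a b : W} (p : H.Walk a b) (hp : s(u,v) ∉ p.edges) :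
    ∃ q : (gluing G H x y u v).Walk (Sum.inr a) (Sum.inr b),
      ∀ e ∈ q.edges, ∃ f ∈ p.edges, e = Sym2.map Sum.inr f := by
  have hmap : ∀ {c d : W}, (H.deleteEdges {s(u,v)}).Adj c d →
      (gluing G H x y u v).Adj (Sum.inr c) (Sum.inr d) := by
    intro c d hab
    rw [deleteEdges_adj] at hab
    exact gluing_adj_inr_inr.2 ⟨hab.1, by simpa using hab.2⟩
  refine ⟨(p.toDeleteEdges {s(u,v)} ?_).map ⟨Sum.inr, hmap⟩, ?_⟩
  · intro e he heq
    obtain rfl := Set.eq_of_mem_singleton heq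
    exact hp he
  · intro e he
    rw [Walk.edges_map, Walk.edges_transfer] at he
    simp only [List.mem_map] at he
    obtain ⟨f, hf, rfl⟩ := he
    exact ⟨f, hf, rfl⟩

/-- detour from `inl x` to `inl y` through `H`, all of whose edges touch `inr`. -/
lemma exists_detour_right (hHb : IsBridgeless H) (huv : H.Adj u v) :
    ∃ D : (gluing G H x y u v).Walk (Sum.inl x) (Sum.inl y),
      ∀ e ∈ D.edges, ∃ w : W, Sum.inr w ∈ e := by
  obtain ⟨p, hp⟩ := exists_walk_avoid hHb huv
  obtain ⟨q, hq⟩ := exists_walkK_inr (G := G) (x := x) (y := y) p hp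
  have hxu : (gluing G H x y u v).Adj (Sum.inl x) (Sum.inr u) :=
    gluing_adj_inl_inr.2 (Or.inl ⟨rfl, rfl⟩)
  have hvy : (gluing G H x y u v).Adj (Sum.inr v) (Sum.inl y) :=
    ((gluing_adj_inl_inr (a := y) (b := v)).2 (Or.inr ⟨rfl, rfl⟩)).symm
  refine ⟨Walk.cons hxu (q.append (Walk.cons hvy Walk.nil)), ?_⟩
  intro e he
  simp only [Walk.edges_cons, Walk.edges_append, Walk.edges_nil, List.mem_cons,
    List.mem_append, List.mem_singleton] at he
  rcases he with rfl | he | rfl | h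
  · exact ⟨u, by simp⟩
  · obtain ⟨f, _, rfl⟩ := hq e he
    induction f using Sym2.ind with
    | _ c d => exact ⟨c, by simp⟩
  · exact ⟨v, by simp⟩
  · simp at h

/-- detour from `inr u` to `inr v` through `G`, all of whose edges touch `inl`. -/
lemma exists_detour_left (hGb : IsBridgeless G) (hxy : G.Adj x y) :
    ∃ D : (gluing G H x y u v).Walk (Sum.inr u) (Sum.inr v),
      ∀ e ∈ D.edges, ∃ w : V, Sum.inl w ∈ e := by
  obtain ⟨p, hp⟩ := exists_walk_avoid hGb hxy
  obtain ⟨q, hq⟩ := exists_walkK_inl (H := H) (u := u) (v := v) p hp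
  have hxu : (gluing G H x y u v).Adj (Sum.inr u) (Sum.inl x) :=
    (gluing_adj_inl_inr.2 (Or.inl ⟨rfl, rfl⟩)).symm
  have hyv : (gluing G H x y u v).Adj (Sum.inl y) (Sum.inr v) :=
    gluing_adj_inl_inr.2 (Or.inr ⟨rfl, rfl⟩)
  refine ⟨Walk.cons hxu (q.append (Walk.cons hyv Walk.nil)), ?_⟩
  intro e he
  simp only [Walk.edges_cons, Walk.edges_append, Walk.edges_nil, List.mem_cons,
    List.mem_append, List.mem_singleton] at he
  rcases he with rfl | he | rfl | h
  · exact ⟨x, by simp⟩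
  · obtain ⟨f, _, rfl⟩ := hq e he
    induction f using Sym2.ind with
    | _ c d => exact ⟨c, by simp⟩
  · exact ⟨y, by simp⟩
  · simp at h

/-- splice any walk of `G` into the gluing. -/
lemma spliceG (hHb : IsBridgeless H) (huv : H.Adj u v) {a b : V} (p : G.Walk a b) :
    ∃ q : (gluing G H x y u v).Walk (Sum.inl a) (Sum.inl b),
      ∀ e ∈ q.edges, (∃ f ∈ p.edges, e = Sym2.map Sum.inl f) ∨ ∃ w : W, Sum.inr w ∈ e := by
  induction p with
  | nil => exact ⟨Walk.nil, by simp⟩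
  | @cons a c b h p ih =>
    obtain ⟨q', hq'⟩ := ih
    by_cases hs : s(a,c) = s(x,y)
    · obtain ⟨D, hD⟩ := exists_detour_right (G := G) (x := x) (y := y) hHb huv
      rw [Sym2.eq_iff] at hs
      rcases hs with ⟨rfl, rfl⟩ | ⟨rfl, rfl⟩
      · refine ⟨D.append q', ?_⟩
        intro e he
        rw [Walk.edges_append, List.mem_append] at he
        rcases he with he | he
        · exact Or.inr (hD e he)
        · rcases hq' e he with ⟨f, hf, rfl⟩ | hw
          · exact Or.inl ⟨f, List.mem_cons_of_mem _ hf, rfl⟩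
          · exact Or.inr hw
      · refine ⟨D.reverse.append q', ?_⟩
        intro e he
        rw [Walk.edges_append, List.mem_append, Walk.edges_reverse, List.mem_reverse] at he
        rcases he with he | he
        · exact Or.inr (hD e he)
        · rcases hq' e he with ⟨f, hf, rfl⟩ | hw
          · exact Or.inl ⟨f, List.mem_cons_of_mem _ hf, rfl⟩
          · exact Or.inr hw
    · refine ⟨Walk.cons (gluing_adj_inl_inl.2 ⟨h, hs⟩) q', ?_⟩
      intro e he
      rw [Walk.edges_cons, List.mem_cons] at he
      rcases he with rfl | he
      · exact Or.inl ⟨s(a,c), List.mem_cons_self, by simp⟩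
      · rcases hq' e he with ⟨f, hf, rfl⟩ | hw
        · exact Or.inl ⟨f, List.mem_cons_of_mem _ hf, rfl⟩
        · exact Or.inr hw

lemma spliceH (hGb : IsBridgeless G) (hxy : G.Adj x y) {a b : W} (p : H.Walk a b) :
    ∃ q : (gluing G H x y u v).Walk (Sum.inr a) (Sum.inr b),
      ∀ e ∈ q.edges, (∃ f ∈ p.edges, e = Sym2.map Sum.inr f) ∨ ∃ w : V, Sum.inl w ∈ e := by
  induction p with
  | nil => exact ⟨Walk.nil, by simp⟩
  | @cons a c b h p ih =>
    obtain ⟨q', hq'⟩ := ih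
    by_cases hs : s(a,c) = s(u,v)
    · obtain ⟨D, hD⟩ := exists_detour_left (H := H) (u := u) (v := v) hGb hxy
      rw [Sym2.eq_iff] at hs
      rcases hs with ⟨rfl, rfl⟩ | ⟨rfl, rfl⟩
      · refine ⟨D.append q', ?_⟩
        intro e he
        rw [Walk.edges_append, List.mem_append] at he
        rcases he with he | he
        · exact Or.inr (hD e he)
        · rcases hq' e he with ⟨f, hf, rfl⟩ | hw
          · exact Or.inl ⟨f, List.mem_cons_of_mem _ hf, rfl⟩
          · exact Or.inr hw
      · refine ⟨D.reverse.append q', ?_⟩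
        intro e he
        rw [Walk.edges_append, List.mem_append, Walk.edges_reverse, List.mem_reverse] at he
        rcases he with he | he
        · exact Or.inr (hD e he)
        · rcases hq' e he with ⟨f, hf, rfl⟩ | hw
          · exact Or.inl ⟨f, List.mem_cons_of_mem _ hf, rfl⟩
          · exact Or.inr hw
    · refine ⟨Walk.cons (gluing_adj_inr_inr.2 ⟨h, hs⟩) q', ?_⟩
      intro e he
      rw [Walk.edges_cons, List.mem_cons] at he
      rcases he with rfl | he
      · exact Or.inl ⟨s(a,c), List.mem_cons_self, by simp⟩
      · rcases hq' e he with ⟨f, hf, rfl⟩ | hw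
        · exact Or.inl ⟨f, List.mem_cons_of_mem _ hf, rfl⟩
        · exact Or.inr hw


lemma map_inl_eq_pair {f : Sym2 V} {a b : V}
    (h : s(Sum.inl a, Sum.inl b) = Sym2.map (Sum.inl : V → V ⊕ W) f) : f = s(a, b) := by
  induction f using Sym2.ind with
  | _ c d =>
    rw [Sym2.map_pair_eq, Sym2.eq_iff] at h
    rw [Sym2.eq_iff]
    rcases h with ⟨h1, h2⟩ | ⟨h1, h2⟩
    · exact Or.inl ⟨(Sum.inl_injective h1).symm, (Sum.inl_injective h2).symm⟩
    · exact Or.inr ⟨(Sum.inl_injective h2).symm, (Sum.inl_injective h1).symm⟩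

lemma map_inr_eq_pair {f : Sym2 W} {a b : W}
    (h : s(Sum.inr a, Sum.inr b) = Sym2.map (Sum.inr : W → V ⊕ W) f) : f = s(a, b) := by
  induction f using Sym2.ind with
  | _ c d =>
    rw [Sym2.map_pair_eq, Sym2.eq_iff] at h
    rw [Sym2.eq_iff]
    rcases h with ⟨h1, h2⟩ | ⟨h1, h2⟩
    · exact Or.inl ⟨(Sum.inr_injective h1).symm, (Sum.inr_injective h2).symm⟩
    · exact Or.inr ⟨(Sum.inr_injective h2).symm, (Sum.inr_injective h1).symm⟩

lemma not_bridge_inl_inl (hGb : IsBridgeless G) (hHb : IsBridgeless H) (huv : H.Adj u v)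
    {a b : V} : ¬ (gluing G H x y u v).IsBridge s(Sum.inl a, Sum.inl b) := by
  intro hbr
  rw [isBridge_iff_adj_and_forall_walk_mem_edges] at hbr
  have hall := hbr
  obtain ⟨p0, hp0⟩ := exists_walk_avoid' hGb a b
  obtain ⟨q0, hq0⟩ := spliceG (x := x) (y := y) hHb huv p0
  rcases hq0 _ (hall q0) with ⟨f, hf, heq⟩ | ⟨w, hw⟩
  · exact hp0 (map_inl_eq_pair heq ▸ hf)
  · simp at hw

lemma not_bridge_inr_inr (hGb : IsBridgeless G) (hHb : IsBridgeless H) (hxy : G.Adj x y)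
    {a b : W} : ¬ (gluing G H x y u v).IsBridge s(Sum.inr a, Sum.inr b) := by
  intro hbr
  rw [isBridge_iff_adj_and_forall_walk_mem_edges] at hbr
  have hall := hbr
  obtain ⟨p0, hp0⟩ := exists_walk_avoid' hHb a b
  obtain ⟨q0, hq0⟩ := spliceH (u := u) (v := v) hGb hxy p0
  rcases hq0 _ (hall q0) with ⟨f, hf, heq⟩ | ⟨w, hw⟩
  · exact hp0 (map_inr_eq_pair heq ▸ hf)
  · simp at hw

lemma not_bridge_inl_inr (hGb : IsBridgeless G) (hHb : IsBridgeless H)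
    (hxy : G.Adj x y) (huv : H.Adj u v) {a : V} {b : W} :
    ¬ (gluing G H x y u v).IsBridge s(Sum.inl a, Sum.inr b) := by
  intro hbr
  rw [isBridge_iff_adj_and_forall_walk_mem_edges] at hbr
  obtain ⟨pa, -⟩ := exists_walk_avoid' hGb a x
  obtain ⟨qa, -⟩ := spliceG (x := x) (y := y) hHb huv pa
  obtain ⟨pb, -⟩ := exists_walk_avoid' hHb u b
  obtain ⟨qb, -⟩ := spliceH (u := u) (v := v) hGb hxy pb
  have hadj : (gluing G H x y u v).Adj (Sum.inl a) (Sum.inr b) :=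
    (mem_edgeSet _).1 (Walk.edges_subset_edgeSet _
      (hbr (qa.append (Walk.cons (gluing_adj_inl_inr.2 (Or.inl ⟨rfl, rfl⟩)) qb))))
  have hall := hbr
  rw [gluing_adj_inl_inr] at hadj
  rcases hadj with ⟨rfl, rfl⟩ | ⟨rfl, rfl⟩
  · -- a = x, b = u
    obtain ⟨pG, hpG⟩ := exists_walk_avoid hGb hxy
    obtain ⟨qG, hqG⟩ := exists_walkK_inl (H := H) (u := b) (v := v) pG hpG
    obtain ⟨pH, hpH⟩ := exists_walk_avoid hHb huv
    obtain ⟨qH, hqH⟩ := exists_walkK_inr (G := G) (x := a) (y := y) pH hpH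
    have hyv : (gluing G H a y b v).Adj (Sum.inl y) (Sum.inr v) :=
      gluing_adj_inl_inr.2 (Or.inr ⟨rfl, rfl⟩)
    have hmem := hall (qG.append (Walk.cons hyv qH.reverse))
    rw [Walk.edges_append, List.mem_append, Walk.edges_cons, List.mem_cons,
      Walk.edges_reverse, List.mem_reverse] at hmem
    rcases hmem with hmem | hmem | hmem
    · obtain ⟨f, -, heq⟩ := hqG _ hmem
      have hm : (Sum.inr b : V ⊕ W) ∈ s(Sum.inl a, Sum.inr b) := by simp
      rw [heq] at hm
      exact no_inr_in_map_inl hm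
    · rw [Sym2.eq_iff] at hmem
      rcases hmem with ⟨h1, h2⟩ | ⟨h1, h2⟩
      · exact hxy.ne (Sum.inl_injective h1)
      · simp at h1
    · obtain ⟨f, -, heq⟩ := hqH _ hmem
      have hm : (Sum.inl a : V ⊕ W) ∈ s(Sum.inl a, Sum.inr b) := by simp
      rw [heq] at hm
      exact no_inl_in_map_inr hm
  · -- a = y, b = v
    obtain ⟨pG, hpG⟩ := exists_walk_avoid hGb hxy
    obtain ⟨qG, hqG⟩ := exists_walkK_inl (H := H) (u := u) (v := b) pG hpG
    obtain ⟨pH, hpH⟩ := exists_walk_avoid hHb huv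
    obtain ⟨qH, hqH⟩ := exists_walkK_inr (G := G) (x := x) (y := a) pH hpH
    have hxu : (gluing G H x a u b).Adj (Sum.inl x) (Sum.inr u) :=
      gluing_adj_inl_inr.2 (Or.inl ⟨rfl, rfl⟩)
    have hmem := hall (qG.reverse.append (Walk.cons hxu qH))
    rw [Walk.edges_append, List.mem_append, Walk.edges_cons, List.mem_cons,
      Walk.edges_reverse, List.mem_reverse] at hmem
    rcases hmem with hmem | hmem | hmem
    · obtain ⟨f, -, heq⟩ := hqG _ hmem
      have hm : (Sum.inr b : V ⊕ W) ∈ s(Sum.inl a, Sum.inr b) := by simp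
      rw [heq] at hm
      exact no_inr_in_map_inl hm
    · rw [Sym2.eq_iff] at hmem
      rcases hmem with ⟨h1, h2⟩ | ⟨h1, h2⟩
      · exact hxy.ne' (Sum.inl_injective h1)
      · simp at h1
    · obtain ⟨f, -, heq⟩ := hqH _ hmem
      have hm : (Sum.inl a : V ⊕ W) ∈ s(Sum.inl a, Sum.inr b) := by simp
      rw [heq] at hm
      exact no_inl_in_map_inr hm

end GluingAux

/-- The gluing of two cubic bridgeless graphs along edges
`x — y` and `u — v` is a cubic bridgeless graph. -/
theorem gluing_isCubic_isBridgeless {V W : Type} [Fintype V] [Fintype W]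
    (G : SimpleGraph V) (H : SimpleGraph W) (x y : V) (u v : W)
    (hGc : IsCubic G) (hGb : IsBridgeless G) (hHc : IsCubic H) (hHb : IsBridgeless H)
    (hxy : G.Adj x y) (huv : H.Adj u v) :
    IsCubic (gluing G H x y u v) ∧ IsBridgeless (gluing G H x y u v) := by
  constructor
  · -- cubic
    intro p
    rcases p with a | a
    · by_cases hax : a = x
      · subst hax
        rw [nbr_inl_x hxy, Set.ncard_union_eq (Set.disjoint_singleton_right.2 (by simp))
          (Set.toFinite _) (Set.toFinite _),
          Set.ncard_image_of_injective _ Sum.inl_injective,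
          Set.ncard_diff_singleton_of_mem (by exact hxy), hGc a,
          Set.ncard_singleton]
      · by_cases hay : a = y
        · subst hay
          rw [nbr_inl_y hxy, Set.ncard_union_eq (Set.disjoint_singleton_right.2 (by simp))
            (Set.toFinite _) (Set.toFinite _),
            Set.ncard_image_of_injective _ Sum.inl_injective,
            Set.ncard_diff_singleton_of_mem (by exact hxy.symm), hGc a,
            Set.ncard_singleton]
        · rw [nbr_inl_other hxy hax hay,
            Set.ncard_image_of_injective _ Sum.inl_injective, hGc a]
    · by_cases hax : a = u
      · subst hax
        rw [nbr_inr_u hxy huv, Set.ncard_union_eq (Set.disjoint_singleton_right.2 (by simp))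
          (Set.toFinite _) (Set.toFinite _),
          Set.ncard_image_of_injective _ Sum.inr_injective,
          Set.ncard_diff_singleton_of_mem (by exact huv), hHc a,
          Set.ncard_singleton]
      · by_cases hay : a = v
        · subst hay
          rw [nbr_inr_v hxy huv, Set.ncard_union_eq (Set.disjoint_singleton_right.2 (by simp))
            (Set.toFinite _) (Set.toFinite _),
            Set.ncard_image_of_injective _ Sum.inr_injective,
            Set.ncard_diff_singleton_of_mem (by exact huv.symm), hHc a,
            Set.ncard_singleton]
        · rw [nbr_inr_other huv hax hay,
            Set.ncard_image_of_injective _ Sum.inr_injective, hHc a]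
  · -- bridgeless
    intro e
    induction e using Sym2.ind with
    | _ p q =>
      rcases p with a | a <;> rcases q with b | b
      · exact not_bridge_inl_inl hGb hHb huv
      · exact not_bridge_inl_inr hGb hHb hxy huv
      · rw [Sym2.eq_swap]
        exact not_bridge_inl_inr hGb hHb hxy huv
      · exact not_bridge_inr_inr hGb hHb hxy
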